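/- Suppose $\lambda : [0,T) \to (0,\infty)$ and $\rho : [0,T) \to \mathbb{R}$ are functions such that: (i) $\lambda$ is continuous; (ii) for every $t_0 \in (0,T)$ there exist $\delta > 0$ and a differentiable function $\Lambda : (t_0 - \delta, t_0] \to (0,\infty)$ with $\Lambda(t_0) = \lambda(t_0)$, $\Lambda(t) \ge \lambda(t)$ for all $t$, and $\Lambda'(t) > \Lambda(t)\rho(t)$ on $(t_0-\delta, t_0]$; and (iii) $\rho$ is continuous. Then $t \mapsto \lambda(t)\exp(-\int_0^t \rho(s)ds)$ is strictly increasing on $[0,T)$. -/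

import Mathlib

open Set Filter MeasureTheory

/-- abstract barrier argument: if `λ > 0` is continuous on `[0,T)`, `ρ` is
continuous, and every `t₀ ∈ (0,T)` admits a positive differentiable upper barrier `Λ` on
`(t₀-δ, t₀]` touching `λ` at `t₀` with `Λ' > Λρ`, then `t ↦ λ(t)·exp(-∫₀ᵗ ρ)` is strictly
increasing on `[0,T)`. -/
theorem stmt_11 (T : ℝ) (hT : 0 < T) (lam ρ : ℝ → ℝ)
    (hpos : ∀ t ∈ Ico (0 : ℝ) T, 0 < lam t)
    (hcont : ContinuousOn lam (Ico 0 T))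
    (hρ : ContinuousOn ρ (Ico 0 T))
    (hbar : ∀ t₀ ∈ Ioo (0 : ℝ) T, ∃ δ > (0 : ℝ), ∃ Λ Λ' : ℝ → ℝ,
      Λ t₀ = lam t₀ ∧ ∀ t ∈ Ioc (t₀ - δ) t₀,
        0 < Λ t ∧ lam t ≤ Λ t ∧ HasDerivAt Λ (Λ' t) t ∧ Λ t * ρ t < Λ' t) :
    StrictMonoOn (fun t => lam t * Real.exp (-∫ s in (0 : ℝ)..t, ρ s)) (Ico 0 T) := by
  set I : ℝ → ℝ := fun t => ∫ s in (0 : ℝ)..t, ρ s with hI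
  set F : ℝ → ℝ := fun t => lam t * Real.exp (-I t) with hF
  -- derivative of the primitive at interior points
  have hIderiv : ∀ t ∈ Ioo (0 : ℝ) T, HasDerivAt I (ρ t) t := by
    intro t ht
    have hsub : uIcc (0 : ℝ) t ⊆ Ico 0 T := by
      rw [uIcc_of_le ht.1.le]
      exact Icc_subset_Ico_right ht.2
    have hint : IntervalIntegrable ρ volume 0 t :=
      (hρ.mono hsub).intervalIntegrable
    have hmem : Ico (0 : ℝ) T ∈ nhds t := Ico_mem_nhds ht.1 ht.2
    have hmeas : StronglyMeasurableAtFilter ρ (nhds t) :=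
      ⟨Ico 0 T, hmem, hρ.aestronglyMeasurable measurableSet_Ico⟩
    exact intervalIntegral.integral_hasDerivAt_right hint hmeas (hρ.continuousAt hmem)
  -- the local barrier estimate
  have star : ∀ t₀ ∈ Ioo (0 : ℝ) T, ∃ δ > (0 : ℝ), ∀ t ∈ Ioo (t₀ - δ) t₀, F t < F t₀ := by
    intro t₀ ht₀
    obtain ⟨δ, hδ, Λ, Λ', hΛeq, hΛ⟩ := hbar t₀ ht₀
    refine ⟨min δ t₀, lt_min hδ ht₀.1, ?_⟩
    intro t ht
    have hsub : Ioc (t₀ - min δ t₀) t₀ ⊆ Ioc (t₀ - δ) t₀ := by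
      apply Ioc_subset_Ioc_left
      linarith [min_le_left δ t₀]
    have hsubT : Ioc (t₀ - min δ t₀) t₀ ⊆ Ioo (0 : ℝ) T := by
      intro x hx
      constructor
      · have : t₀ - min δ t₀ ≥ 0 := by linarith [min_le_right δ t₀]
        linarith [hx.1]
      · exact lt_of_le_of_lt hx.2 ht₀.2
    set G : ℝ → ℝ := fun u => Λ u * Real.exp (-I u) with hG
    have hGderiv : ∀ x ∈ Ioc (t₀ - min δ t₀) t₀,
        HasDerivAt G ((Λ' x - Λ x * ρ x) * Real.exp (-I x)) x := by
      intro x hx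
      obtain ⟨_, _, hD, _⟩ := hΛ x (hsub hx)
      have hE : HasDerivAt (fun u => Real.exp (-I u)) (Real.exp (-I x) * (-ρ x)) x :=
        ((hIderiv x (hsubT hx)).neg).exp
      have : HasDerivAt (fun u => Λ u * Real.exp (-I u)) _ x := hD.mul hE
      convert this using 1
      ring
    -- G is strictly monotone on [t, t₀]
    have hIccsub : Icc t t₀ ⊆ Ioc (t₀ - min δ t₀) t₀ := fun x hx =>
      ⟨lt_of_lt_of_le ht.1 hx.1, hx.2⟩
    have hGmono : StrictMonoOn G (Icc t t₀) := by
      apply strictMonoOn_of_deriv_pos (convex_Icc t t₀)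
      · intro x hx
        exact ((hGderiv x (hIccsub hx)).differentiableAt).continuousAt.continuousWithinAt
      · intro x hx
        rw [interior_Icc] at hx
        have hx' : x ∈ Icc t t₀ := Ioo_subset_Icc_self hx
        rw [(hGderiv x (hIccsub hx')).deriv]
        obtain ⟨_, _, _, hlt⟩ := hΛ x (hsub (hIccsub hx'))
        exact mul_pos (by linarith) (Real.exp_pos _)
    have htmem : t ∈ Ioc (t₀ - min δ t₀) t₀ := ⟨ht.1, ht.2.le⟩
    obtain ⟨_, hle, _, _⟩ := hΛ t (hsub htmem)
    have h1 : F t ≤ G t :=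
      mul_le_mul_of_nonneg_right hle (Real.exp_pos _).le
    have h2 : G t < G t₀ :=
      hGmono ⟨le_refl t, ht.2.le⟩ ⟨ht.2.le, le_refl t₀⟩ ht.2
    have h3 : G t₀ = F t₀ := by simp [hG, hF, hΛeq]
    linarith
  -- global argument
  intro a ha b hb hab
  by_contra hcon
  push_neg at hcon
  have hIcc : Icc a b ⊆ Ico 0 T := fun x hx => ⟨le_trans ha.1 hx.1, lt_of_le_of_lt hx.2 hb.2⟩
  -- continuity of F on [a,b]
  have hFcont : ContinuousOn F (Icc a b) := by
    have hint : IntervalIntegrable ρ volume 0 b := by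
      apply (hρ.mono _).intervalIntegrable
      rw [uIcc_of_le (le_trans ha.1 hab.le)]
      exact Icc_subset_Ico_right hb.2
    have hIcont : ContinuousOn I (Icc a b) := by
      have h0b : ContinuousOn I (uIcc 0 b) :=
        intervalIntegral.continuousOn_primitive_interval' hint left_mem_uIcc
      apply h0b.mono
      rw [uIcc_of_le (le_trans ha.1 hab.le)]
      exact Icc_subset_Icc ha.1 le_rfl
    exact (hcont.mono hIcc).mul (hIcont.neg.rexp)
  obtain ⟨c, hc, hmin⟩ := isCompact_Icc.exists_isMinOn ⟨a, left_mem_Icc.2 hab.le⟩ hFcont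
  set c' : ℝ := if c ≤ a then b else c with hc'
  have hc'prop : a < c' ∧ c' ≤ b ∧ F c' ≤ F c := by
    by_cases h : c ≤ a
    · have hca : c = a := le_antisymm h hc.1
      refine ⟨by simp [hc', h, hab], by simp [hc', h], ?_⟩
      have : F b ≤ F a := hcon
      simp only [hc', if_pos h]
      rw [hca]
      exact this
    · push_neg at h
      exact ⟨by simp [hc', not_le.2 h, h], by simp [hc', not_le.2 h, hc.2], by simp [hc', not_le.2 h]⟩
  obtain ⟨hac', hc'b, hFc'⟩ := hc'prop
  have hc'T : c' ∈ Ioo (0 : ℝ) T :=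
    ⟨lt_of_le_of_lt ha.1 hac', lt_of_le_of_lt hc'b hb.2⟩
  obtain ⟨δ, hδ, hstar⟩ := star c' hc'T
  set t : ℝ := max ((a + c') / 2) (c' - δ / 2) with htdef
  have ht1 : t < c' := max_lt (by linarith) (by linarith)
  have ht2 : c' - δ < t := lt_of_lt_of_le (by linarith) (le_max_right _ _)
  have ht3 : a < t := lt_of_lt_of_le (by linarith) (le_max_left _ _)
  have htmem : t ∈ Icc a b := ⟨ht3.le, le_trans ht1.le hc'b⟩
  have := hstar t ⟨ht2, ht1⟩
  have hmin' : F c ≤ F t := hmin htmem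
  linarith
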